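/- arXiv:2010.16093 — 4 statements merged into one kernel-verified Lean document; each statement's English description precedes it below -/
import Mathlib

section
/- Let s be a fixed complex parameter with s ≠ ±1, s ≠ 0, and define x(t) = -(st² + s + 2t)(2st + t² + 1)s / (4(s+1)²(s-1)²t²) and y(t) = (t+1)²/(2t) for t ≠ 0. Then, denoting by ẋ and ẏ the derivatives of x and y with respect to t, the identity -2y(y-2)ẋ² + 2(y-1)(4x-1)ẋẏ - 2x(4x-1)ẏ² = 0 holds identically in t (for all t ≠ 0 where all expressions are defined). -/
/-- The parametrization `x(t)` of the first argument of Horn's `H₄` used in the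
derivation of its Bailey-type factorization (for a fixed parameter `s`). -/
noncomputable def xH4 (s t : ℂ) : ℂ :=
  -((s * t ^ 2 + s + 2 * t) * (2 * s * t + t ^ 2 + 1) * s) /
    (4 * (s + 1) ^ 2 * (s - 1) ^ 2 * t ^ 2)

/-- The parametrization `y(t)` of the second argument of Horn's `H₄`. -/
noncomputable def yH4 (t : ℂ) : ℂ := (t + 1) ^ 2 / (2 * t)

set_option maxHeartbeats 2000000 in
/-- For fixed `s ≠ 0, ±1` and the curves `x(t) = -(st²+s+2t)(2st+t²+1)s/(4(s+1)²(s-1)²t²)`,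
`y(t) = (t+1)²/(2t)`, the numerator of the coefficient of `F_xy` in the reduction of the
`H₄` system vanishes identically:
`-2y(y-2)ẋ² + 2(y-1)(4x-1)ẋẏ - 2x(4x-1)ẏ² = 0` for all `t ≠ 0`. -/
theorem hornH4_Fxy_coefficient_vanishes (s : ℂ) (hs0 : s ≠ 0) (hs1 : s ≠ 1) (hsm1 : s ≠ -1)
    (t : ℂ) (ht : t ≠ 0) :
    -2 * yH4 t * (yH4 t - 2) * (deriv (xH4 s) t) ^ 2
      + 2 * (yH4 t - 1) * (4 * xH4 s t - 1) * deriv (xH4 s) t * deriv yH4 t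
      - 2 * xH4 s t * (4 * xH4 s t - 1) * (deriv yH4 t) ^ 2 = 0 := by
  have hs1' : s - 1 ≠ 0 := sub_ne_zero.mpr hs1
  have hsm1' : s + 1 ≠ 0 := by
    intro h; apply hsm1; linear_combination h
  have hden : 4 * (s + 1) ^ 2 * (s - 1) ^ 2 * t ^ 2 ≠ 0 := by
    simp [hsm1', hs1', ht]
  have hden2 : (2 : ℂ) * t ≠ 0 := by simp [ht]
  -- derivative of x
  have hA : HasDerivAt (fun u : ℂ => s * u ^ 2 + s + 2 * u) (s * (2 * t) + 2) t := by
    have := (((hasDerivAt_pow 2 t).const_mul s).add_const s).add ((hasDerivAt_id t).const_mul 2)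
    exact this.congr_deriv (by norm_num <;> ring)
  have hB : HasDerivAt (fun u : ℂ => 2 * s * u + u ^ 2 + 1) (2 * s + 2 * t) t := by
    have := (((hasDerivAt_id t).const_mul (2 * s)).add (hasDerivAt_pow 2 t)).add_const 1
    simpa using this
  have hnum : HasDerivAt (fun u : ℂ => -((s * u ^ 2 + s + 2 * u) * (2 * s * u + u ^ 2 + 1) * s))
      (-(((s * (2 * t) + 2) * (2 * s * t + t ^ 2 + 1) + (s * t ^ 2 + s + 2 * t) * (2 * s + 2 * t)) * s)) t := by
    have := ((hA.mul hB).mul_const s).neg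
    exact this.congr_deriv (by ring)
  have hg : HasDerivAt (fun u : ℂ => 4 * (s + 1) ^ 2 * (s - 1) ^ 2 * u ^ 2)
      (4 * (s + 1) ^ 2 * (s - 1) ^ 2 * (2 * t)) t := by
    have := (hasDerivAt_pow 2 t).const_mul (4 * (s + 1) ^ 2 * (s - 1) ^ 2)
    simpa [mul_assoc] using this
  have hx : HasDerivAt (xH4 s)
      (((-(((s * (2 * t) + 2) * (2 * s * t + t ^ 2 + 1) + (s * t ^ 2 + s + 2 * t) * (2 * s + 2 * t)) * s))
          * (4 * (s + 1) ^ 2 * (s - 1) ^ 2 * t ^ 2)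
        - (-((s * t ^ 2 + s + 2 * t) * (2 * s * t + t ^ 2 + 1) * s))
          * (4 * (s + 1) ^ 2 * (s - 1) ^ 2 * (2 * t))) /
        (4 * (s + 1) ^ 2 * (s - 1) ^ 2 * t ^ 2) ^ 2) t := by
    exact hnum.div hg hden
  have hy : HasDerivAt yH4
      (((2 * (t + 1)) * (2 * t) - (t + 1) ^ 2 * 2) / (2 * t) ^ 2) t := by
    have hn : HasDerivAt (fun u : ℂ => (u + 1) ^ 2) (2 * (t + 1)) t := by
      have := ((hasDerivAt_id t).add_const 1).pow 2
      exact this.congr_deriv (by norm_num <;> ring)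
    have hd : HasDerivAt (fun u : ℂ => 2 * u) (2 : ℂ) t := by
      simpa using (hasDerivAt_id t).const_mul 2
    exact hn.div hd hden2
  have hc : (4 : ℂ) * (s + 1) ^ 2 * (s - 1) ^ 2 ≠ 0 := by
    simp [hsm1', hs1']
  have hx2 : deriv (xH4 s) t
      = -s * (((s * (2 * t) + 2) * (2 * s * t + t ^ 2 + 1)
          + (s * t ^ 2 + s + 2 * t) * (2 * s + 2 * t)) * t
          - 2 * (s * t ^ 2 + s + 2 * t) * (2 * s * t + t ^ 2 + 1))
        / (4 * (s + 1) ^ 2 * (s - 1) ^ 2 * t ^ 3) := by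
    rw [hx.deriv]
    rw [div_eq_div_iff (pow_ne_zero 2 hden) (by exact mul_ne_zero hc (pow_ne_zero 3 ht))]
    ring
  have hy2 : deriv yH4 t = (t ^ 2 - 1) / (2 * t ^ 2) := by
    rw [hy.deriv]
    rw [div_eq_div_iff (pow_ne_zero 2 hden2) (by simp [ht])]
    ring
  obtain ⟨c, hcdef⟩ : ∃ c : ℂ, c = 4 * (s + 1) ^ 2 * (s - 1) ^ 2 := ⟨_, rfl⟩
  have hc0 : c ≠ 0 := by rw [hcdef]; exact hc
  have hx3 : deriv (xH4 s) t
      = -s * (((s * (2 * t) + 2) * (2 * s * t + t ^ 2 + 1)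
          + (s * t ^ 2 + s + 2 * t) * (2 * s + 2 * t)) * t
          - 2 * (s * t ^ 2 + s + 2 * t) * (2 * s * t + t ^ 2 + 1)) / (c * t ^ 3) := by
    rw [hx2, hcdef]
  have hX : xH4 s t = -((s * t ^ 2 + s + 2 * t) * (2 * s * t + t ^ 2 + 1) * s) / (c * t ^ 2) := by
    rw [xH4, hcdef]
  rw [hx3, hy2, hX]
  unfold yH4
  field_simp [hc0, ht]
  have hD : 2 * t * (c * t ^ 2) * (c * t ^ 3) * (2 * t ^ 2) ≠ 0 := by
    apply mul_ne_zero
    apply mul_ne_zero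
    apply mul_ne_zero
    · exact mul_ne_zero two_ne_zero ht
    · exact mul_ne_zero hc0 (pow_ne_zero 2 ht)
    · exact mul_ne_zero hc0 (pow_ne_zero 3 ht)
    · exact mul_ne_zero two_ne_zero (pow_ne_zero 2 ht)
  rw [hcdef]
  ring
end

section
/- The substitution σ = -(s²+1)/(s²-1), τ = (st+1)/(st-1) transforms the pair of rational functions (x(σ,τ), y(σ,τ)) = (-(στ² + σ + 2τ)(2στ + τ² + 1)σ / (4(σ²-1)²τ²), (τ+1)²/(2τ)) into the pair ((s⁴-1)(t⁴-1)/(4(s²t²-1)²), 2s²t²/(s²t²-1)); in particular both resulting rational functions are symmetric under interchanging s and t. This is an identity of rational functions in s and t, valid wherever all expressions are defined (s² ≠ 1, st ≠ ±1, etc.). -/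
set_option maxHeartbeats 1000000
set_option maxRecDepth 10000

/-- The substitution `σ = -(s²+1)/(s²-1)`, `τ = (st+1)/(st-1)` transforms the pair of
rational functions
`(x(σ,τ), y(σ,τ)) = (-(στ²+σ+2τ)(2στ+τ²+1)σ/(4(σ²-1)²τ²), (τ+1)²/(2τ))`
(the parametrization of the arguments of Horn's `H₄`) into the pair
`((s⁴-1)(t⁴-1)/(4(s²t²-1)²), 2s²t²/(s²t²-1))`, which is symmetric in `s` and `t`;
valid wherever all expressions are defined. -/
theorem hornH4_argument_symmetrization (s t σ τ : ℂ)
    (hσ : σ = -(s ^ 2 + 1) / (s ^ 2 - 1))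
    (hτ : τ = (s * t + 1) / (s * t - 1))
    (hs0 : s ≠ 0) (hs : s ^ 2 ≠ 1)
    (h1 : s * t ≠ 1) (h2 : s * t ≠ -1) :
    -((σ * τ ^ 2 + σ + 2 * τ) * (2 * σ * τ + τ ^ 2 + 1) * σ) /
        (4 * (σ ^ 2 - 1) ^ 2 * τ ^ 2) =
      (s ^ 4 - 1) * (t ^ 4 - 1) / (4 * (s ^ 2 * t ^ 2 - 1) ^ 2) ∧
    (τ + 1) ^ 2 / (2 * τ) = 2 * s ^ 2 * t ^ 2 / (s ^ 2 * t ^ 2 - 1) := by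
  have hA : s ^ 2 - 1 ≠ 0 := sub_ne_zero.mpr hs
  have hB : s * t - 1 ≠ 0 := sub_ne_zero.mpr h1
  have hC : s * t + 1 ≠ 0 := fun h => h2 (by linear_combination h)
  have hD : s ^ 2 * t ^ 2 - 1 ≠ 0 := fun h => by
    have : (s * t - 1) * (s * t + 1) = 0 := by linear_combination h
    rcases mul_eq_zero.mp this with h | h
    exacts [hB h, hC h]
  have e1 : σ * (s ^ 2 - 1) = -(s ^ 2 + 1) := by
    rw [hσ]; field_simp
  have e2 : τ * (s * t - 1) = s * t + 1 := by
    rw [hτ]; field_simp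
  have hσ2 : σ ^ 2 - 1 ≠ 0 := fun h => by
    have h4 : (4 : ℂ) * s ^ 2 = 0 := by
      linear_combination (s ^ 2 - 1) ^ 2 * h - (σ * (s ^ 2 - 1) - (s ^ 2 + 1)) * e1
    exact hs0 (pow_eq_zero_iff (n := 2) (by norm_num) |>.mp (by linear_combination h4 / 4))
  have hτ0 : τ ≠ 0 := fun h => hC (by linear_combination (s * t - 1) * h - e2)
  have c1 : (σ * τ ^ 2 + σ + 2 * τ) * ((s ^ 2 - 1) * (s * t - 1) ^ 2)
      = -4 * s ^ 2 * (t ^ 2 + 1) := by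
    linear_combination (σ * (s ^ 2 - 1) * (τ * (s * t - 1) + (s * t + 1))
      + 2 * (s ^ 2 - 1) * (s * t - 1)) * e2 + 2 * (s ^ 2 * t ^ 2 + 1) * e1
  have c2 : (2 * σ * τ + τ ^ 2 + 1) * ((s ^ 2 - 1) * (s * t - 1) ^ 2)
      = 4 * s ^ 2 * (1 - t ^ 2) := by
    linear_combination 2 * (s * t - 1) * (s * t + 1) * e1
      + (2 * σ * (s ^ 2 - 1) * (s * t - 1)
        + (s ^ 2 - 1) * (τ * (s * t - 1) + (s * t + 1))) * e2
  have c3 : (σ ^ 2 - 1) * (s ^ 2 - 1) ^ 2 = 4 * s ^ 2 := by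
    linear_combination (σ * (s ^ 2 - 1) - (s ^ 2 + 1)) * e1
  constructor
  · rw [div_eq_div_iff
      (mul_ne_zero (mul_ne_zero (by norm_num : (4:ℂ) ≠ 0) (pow_ne_zero 2 hσ2))
        (pow_ne_zero 2 hτ0))
      (mul_ne_zero (by norm_num : (4:ℂ) ≠ 0) (pow_ne_zero 2 hD))]
    apply mul_left_cancel₀ (pow_ne_zero 4 hB)
    apply mul_left_cancel₀ (pow_ne_zero 4 hA)
    linear_combination
      (-((s ^ 2 - 1) * (4 * (s ^ 2 * t ^ 2 - 1) ^ 2))) *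
        (((2 * σ * τ + τ ^ 2 + 1) * ((s ^ 2 - 1) * (s * t - 1) ^ 2) * σ * (s ^ 2 - 1)) * c1
          + ((-4 * s ^ 2 * (t ^ 2 + 1)) * σ * (s ^ 2 - 1)) * c2
          + ((-4 * s ^ 2 * (t ^ 2 + 1)) * (4 * s ^ 2 * (1 - t ^ 2))) * e1)
      - 4 * ((s ^ 4 - 1) * (t ^ 4 - 1)) * (s * t - 1) ^ 2 *
        ((((σ ^ 2 - 1) * (s ^ 2 - 1) ^ 2 + 4 * s ^ 2) * (τ * (s * t - 1)) ^ 2) * c3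
          + 16 * s ^ 4 * (τ * (s * t - 1) + (s * t + 1)) * e2)
  · rw [div_eq_div_iff (mul_ne_zero two_ne_zero hτ0) hD]
    linear_combination (τ * (s * t + 1) - (s * t - 1)) * e2
end

section
/- Under the substitution s = u/2 and t = -(u+v)/(2(3uv+1)), the following identities of rational functions in u and v hold wherever defined: (i) t² = (u+v)²/(4(3uv+1)²); (ii) 4(144s²t² + 4s² + 32st + 4t² + 1)(4s² + 1)(s+t)s / ((12s² - 1)³ t²) = 4(u²+1)(v²+1)uv / ((3uv+1)(u+v)²); and (iii) -4(s+t)²/(12st+1)² = -v². In particular, the pair of rational functions in (i) and (ii) is symmetric under interchanging u and v, and the expression in (iii) is independent of u. -/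
set_option maxHeartbeats 1600000 in
/-- Under the substitution `s = u/2`, `t = -(u+v)/(2(3uv+1))`, the parametrization
`(x(s,t), y(s,t)) = (t², 4(144s²t²+4s²+32st+4t²+1)(4s²+1)(s+t)s/((12s²-1)³t²))` of the
arguments of Horn's `H₅` becomes `((u+v)²/(4(3uv+1)²), 4(u²+1)(v²+1)uv/((3uv+1)(u+v)²))`,
symmetric in `u` and `v`, while the `₂F₁`-argument `-4(s+t)²/(12st+1)²` becomes `-v²`,
independent of `u`; all identities hold as rational identities wherever defined. -/
theorem hornH5_argument_symmetrization (u v s t : ℂ)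
    (hs : s = u / 2)
    (ht : t = -(u + v) / (2 * (3 * u * v + 1)))
    (h1 : 3 * u * v + 1 ≠ 0) (h2 : u + v ≠ 0) (h3 : 3 * u ^ 2 - 1 ≠ 0) :
    t ^ 2 = (u + v) ^ 2 / (4 * (3 * u * v + 1) ^ 2) ∧
    4 * (144 * s ^ 2 * t ^ 2 + 4 * s ^ 2 + 32 * s * t + 4 * t ^ 2 + 1) *
        (4 * s ^ 2 + 1) * (s + t) * s / ((12 * s ^ 2 - 1) ^ 3 * t ^ 2) =
      4 * (u ^ 2 + 1) * (v ^ 2 + 1) * u * v / ((3 * u * v + 1) * (u + v) ^ 2) ∧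
    -4 * (s + t) ^ 2 / (12 * s * t + 1) ^ 2 = -v ^ 2 := by
  have hD : 2 * (3 * u * v + 1) ≠ 0 := mul_ne_zero two_ne_zero h1
  have hs' : 2 * s = u := by rw [hs]; ring
  have ht' : t * (2 * (3 * u * v + 1)) = -(u + v) := by
    rw [ht, div_mul_cancel₀ _ hD]
  have hk2 : (4 : ℂ) * (3 * u * v + 1) ^ 2 ≠ 0 := by
    intro h
    rcases mul_eq_zero.mp h with h' | h'
    · norm_num at h'
    · exact h1 (pow_eq_zero_iff (by norm_num) |>.mp h')
  have ht2 : t ^ 2 = (u + v) ^ 2 / (4 * (3 * u * v + 1) ^ 2) := by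
    rw [eq_div_iff hk2]
    linear_combination (t * (2 * (3 * u * v + 1)) - (u + v)) * ht'
  have hA : 12 * s ^ 2 - 1 = 3 * u ^ 2 - 1 := by
    linear_combination 3 * (2 * s + u) * hs'
  have h4s : 4 * s ^ 2 + 1 = u ^ 2 + 1 := by
    linear_combination (2 * s + u) * hs'
  have hst : s + t = v * (3 * u ^ 2 - 1) / (2 * (3 * u * v + 1)) := by
    rw [eq_div_iff hD]
    linear_combination (3 * u * v + 1) * hs' + ht'
  have hnum : 12 * s * t + 1 = (1 - 3 * u ^ 2) / (3 * u * v + 1) := by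
    rw [eq_div_iff h1]
    linear_combination 6 * s * ht' - 3 * (u + v) * hs'
  have hN : 144 * s ^ 2 * t ^ 2 + 4 * s ^ 2 + 32 * s * t + 4 * t ^ 2 + 1 =
      4 * (v ^ 2 + 1) * (3 * u ^ 2 - 1) ^ 2 / (2 * (3 * u * v + 1)) ^ 2 := by
    rw [eq_div_iff (pow_ne_zero 2 hD)]
    linear_combination
      (4 * ((12 * s * t + 1) * (3 * u * v + 1) + (1 - 3 * u ^ 2))) *
          (by linear_combination 6 * s * ht' - 3 * (u + v) * hs' :
            (12 * s * t + 1) * (3 * u * v + 1) = 1 - 3 * u ^ 2) +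
        (4 * ((s + t) * (2 * (3 * u * v + 1)) + v * (3 * u ^ 2 - 1))) *
          (by linear_combination (3 * u * v + 1) * hs' + ht' :
            (s + t) * (2 * (3 * u * v + 1)) = v * (3 * u ^ 2 - 1))
  refine ⟨ht2, ?_, ?_⟩
  · rw [hA, h4s, hst, hN, ht2, hs]
    rw [div_eq_div_iff (mul_ne_zero (pow_ne_zero 3 h3)
        (by rw [← ht2]; exact pow_ne_zero 2 (by
          rw [ht]; exact div_ne_zero (neg_ne_zero.mpr h2) hD)))
      (mul_ne_zero h1 (pow_ne_zero 2 h2))]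
    field_simp
    ring
  · rw [hst, hnum]
    have h3' : 1 - 3 * u ^ 2 ≠ 0 := fun h => h3 (by linear_combination -h)
    field_simp
    rw [mul_div_cancel_right₀ _ (by rwa [show v * 3 * u = 3 * u * v by ring] : v * 3 * u + 1 ≠ 0)]
    ring
end

section
/- The substitution σ = -(s²+1)/(s²-1), τ = (st+1)/(st-1) transforms the pair of rational functions (x(σ,τ), y(σ,τ)) = (-(στ² + σ + 2τ)(2στ + τ² + 1)σ / ((σ²-1)²τ²), τ²) into the pair ((s⁴-1)(t⁴-1)/(s²t²-1)², ((st+1)/(st-1))²); in particular both resulting rational functions are symmetric under interchanging s and t. This is an identity of rational functions in s and t, valid wherever all expressions are defined (s² ≠ 1, st ≠ ±1, etc.). -/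
set_option maxHeartbeats 1000000

private lemma keyA (p q r w : ℂ) (hq : q ≠ 0) (hw : w ≠ 0) :
    p / q * (r / w) ^ 2 + p / q + 2 * (r / w)
      = (p * r ^ 2 + p * w ^ 2 + 2 * r * q * w) / (q * w ^ 2) := by
  have e1 : p / q * (r / w) ^ 2 + p / q = (p * r ^ 2 + p * w ^ 2) / (q * w ^ 2) := by
    field_simp
  rw [e1, mul_div_assoc', div_add_div _ _ (mul_ne_zero hq (pow_ne_zero 2 hw)) hw,
    div_eq_div_iff (by simp [hq, hw]) (by simp [hq, hw])]
  ring

private lemma keyB (p q r w : ℂ) (hq : q ≠ 0) (hw : w ≠ 0) :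
    2 * (p / q) * (r / w) + (r / w) ^ 2 + 1
      = (2 * p * r * w + q * r ^ 2 + q * w ^ 2) / (q * w ^ 2) := by
  have e1 : 2 * (p / q) * (r / w) + (r / w) ^ 2
      = (2 * p * r * w + q * r ^ 2) / (q * w ^ 2) := by
    field_simp
  rw [e1, div_add_one (by simp [hq, hw] :  q * w ^ 2 ≠ 0)]

private lemma key (p q r w m : ℂ) (hq : q ≠ 0) (hw : w ≠ 0) (hr : r ≠ 0)
    (hm0 : m ≠ 0) :
    -((p / q * (r / w) ^ 2 + p / q + 2 * (r / w)) *
        (2 * (p / q) * (r / w) + (r / w) ^ 2 + 1) * (p / q)) /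
      ((m / q ^ 2) ^ 2 * (r / w) ^ 2)
  = -((p * r ^ 2 + p * w ^ 2 + 2 * r * q * w) * (2 * p * r * w + q * r ^ 2 + q * w ^ 2) * p * q) /
      (m ^ 2 * r ^ 2 * w ^ 2) := by
  have eD : (m / q ^ 2) ^ 2 * (r / w) ^ 2 = (m ^ 2 * r ^ 2) / (q ^ 4 * w ^ 2) := by
    rw [div_pow, div_pow, div_mul_div_comm]; ring_nf
  rw [keyA p q r w hq hw, keyB p q r w hq hw, eD, div_mul_div_comm, div_mul_div_comm,
    ← neg_div, div_div_div_eq]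
  rw [div_eq_div_iff (by simp [hq, hw, hr, hm0]) (by simp [hr, hw, hm0])]
  ring

/-- The substitution `σ = -(s²+1)/(s²-1)`, `τ = (st+1)/(st-1)` transforms the pair of
rational functions
`(x(σ,τ), y(σ,τ)) = (-(στ²+σ+2τ)(2στ+τ²+1)σ/((σ²-1)²τ²), τ²)`
(the parametrization of the arguments of Horn's `H₁`) into the pair
`((s⁴-1)(t⁴-1)/(s²t²-1)², ((st+1)/(st-1))²)`, which is symmetric in `s` and `t`;
valid wherever all expressions are defined. -/
theorem hornH1_argument_symmetrization (s t σ τ : ℂ)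
    (hσ : σ = -(s ^ 2 + 1) / (s ^ 2 - 1))
    (hτ : τ = (s * t + 1) / (s * t - 1))
    (hs0 : s ≠ 0) (hs : s ^ 2 ≠ 1)
    (h1 : s * t ≠ 1) (h2 : s * t ≠ -1) :
    -((σ * τ ^ 2 + σ + 2 * τ) * (2 * σ * τ + τ ^ 2 + 1) * σ) /
        ((σ ^ 2 - 1) ^ 2 * τ ^ 2) =
      (s ^ 4 - 1) * (t ^ 4 - 1) / (s ^ 2 * t ^ 2 - 1) ^ 2 ∧
    τ ^ 2 = ((s * t + 1) / (s * t - 1)) ^ 2 := by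
  have hd1 : s ^ 2 - 1 ≠ 0 := sub_ne_zero.mpr hs
  have hd2 : s * t - 1 ≠ 0 := sub_ne_zero.mpr h1
  have hd3 : s * t + 1 ≠ 0 := fun h => h2 (by linear_combination h)
  refine ⟨?_, by rw [hτ]⟩
  have hst : s ^ 2 * t ^ 2 - 1 ≠ 0 := by
    intro h; apply hd2
    rcases mul_eq_zero.mp (show (s * t - 1) * (s * t + 1) = 0 by linear_combination h)
      with h' | h'
    · exact h'
    · exact absurd h' hd3
  have hC : σ ^ 2 - 1 = (4 * s ^ 2) / (s ^ 2 - 1) ^ 2 := by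
    rw [hσ, div_pow, div_sub_one (pow_ne_zero 2 hd1)]
    congr 1
    ring
  rw [hC, hσ, hτ,
    key (-(s ^ 2 + 1)) (s ^ 2 - 1) (s * t + 1) (s * t - 1) (4 * s ^ 2) hd1 hd2 hd3
      (by simp [hs0]),
    div_eq_div_iff (by simp [hs0, hd2, hd3]) (pow_ne_zero 2 hst)]
  ring
end
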